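/- For every real x ≥ 2, ∑_{p ≤ x} (log p)/p ≤ log x + log 4, where the sum runs over primes p ≤ x. -/

import Mathlib

open Finset

/-- Each prime power `p ^ (n / p)` divides `n!`. -/
lemma aux_pow_dvd_factorial {p n : ℕ} (hp : p.Prime) :
    p ^ (n / p) ∣ Nat.factorial n := by
  rw [Nat.Prime.pow_dvd_factorial_iff hp (Nat.lt_succ_self (Nat.log p n))]
  rcases lt_or_ge n p with h | h
  · simp [Nat.div_eq_of_lt h]
  · have h1 : (1 : ℕ) ∈ Finset.Ico 1 (Nat.log p n + 1) := by
      simp [Nat.succ_le_iff, Nat.log_pos hp.one_lt h]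
    calc n / p = n / p ^ 1 := by rw [pow_one]
      _ ≤ ∑ i ∈ Finset.Ico 1 (Nat.log p n + 1), n / p ^ i :=
        Finset.single_le_sum (f := fun i => n / p ^ i) (fun i _ => Nat.zero_le _) h1

/-- The product of `p ^ (n / p)` over primes `p ≤ n` divides `n!`. -/
lemma aux_prod_dvd_factorial (n : ℕ) :
    ∏ p ∈ (Finset.range (n + 1)).filter Nat.Prime, p ^ (n / p) ∣ Nat.factorial n := by
  apply Finset.prod_dvd_of_isRelPrime
  · intro p hp q hq hpq
    simp only [Finset.coe_filter, Set.mem_setOf_eq, Finset.mem_range] at hp hq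
    rw [Function.onFun]
    rw [← Nat.coprime_iff_isRelPrime]
    exact ((Nat.coprime_primes hp.2 hq.2).mpr hpq).pow _ _
  · intro p hp
    simp only [Finset.mem_filter] at hp
    exact aux_pow_dvd_factorial hp.2

theorem mertens_type (x : ℝ) (hx : 2 ≤ x) :
    ∑ p ∈ (Finset.range (⌊x⌋₊ + 1)).filter Nat.Prime, Real.log p / p
      ≤ Real.log x + Real.log 4 := by
  set n := ⌊x⌋₊ with hn
  have hn2 : 2 ≤ n := Nat.le_floor (by exact_mod_cast hx)
  have hn0 : (0 : ℝ) < n := by positivity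
  have hnx : (n : ℝ) ≤ x := Nat.floor_le (by linarith)
  set S := (Finset.range (n + 1)).filter Nat.Prime with hS
  -- pointwise bound
  have key : ∀ p ∈ S, Real.log p / p ≤ (((n / p : ℕ) : ℝ) * Real.log p + Real.log p) / n := by
    intro p hp
    simp only [hS, Finset.mem_filter] at hp
    have hp2 : 2 ≤ p := hp.2.two_le
    have hpR : (0 : ℝ) < p := by positivity
    have hlogp : 0 ≤ Real.log p := Real.log_nonneg (by exact_mod_cast Nat.one_le_of_lt hp2)
    rw [div_le_div_iff₀ hpR hn0]
    have hnat : n < (n / p + 1) * p :=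
      (Nat.div_lt_iff_lt_mul (by omega : 0 < p)).mp (Nat.lt_succ_self _)
    have hR : (n : ℝ) ≤ (((n / p : ℕ) : ℝ) + 1) * p := by
      exact_mod_cast hnat.le
    nlinarith [mul_le_mul_of_nonneg_left hR hlogp]
  have hA : ∑ p ∈ S, ((n / p : ℕ) : ℝ) * Real.log p ≤ (n : ℝ) * Real.log x := by
    have hne : ∀ p ∈ S, ((p : ℝ) ^ (n / p) : ℝ) ≠ 0 := by
      intro p hp
      simp only [hS, Finset.mem_filter] at hp
      have : (0 : ℝ) < p := by exact_mod_cast hp.2.pos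
      positivity
    have h1 : ∑ p ∈ S, ((n / p : ℕ) : ℝ) * Real.log p
        = Real.log ((∏ p ∈ S, p ^ (n / p) : ℕ) : ℝ) := by
      push_cast
      rw [Real.log_prod hne]
      simp_rw [Real.log_pow]
    have hdvd := aux_prod_dvd_factorial n
    have hprodpos : 0 < ∏ p ∈ S, p ^ (n / p) := by
      apply Finset.prod_pos
      intro p hp
      simp only [hS, Finset.mem_filter] at hp
      exact pow_pos hp.2.pos _
    have h2 : ((∏ p ∈ S, p ^ (n / p) : ℕ) : ℝ) ≤ ((Nat.factorial n : ℕ) : ℝ) := by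
      exact_mod_cast Nat.le_of_dvd n.factorial_pos hdvd
    have h3 : Real.log ((∏ p ∈ S, p ^ (n / p) : ℕ) : ℝ)
        ≤ Real.log ((Nat.factorial n : ℕ) : ℝ) :=
      Real.log_le_log (by exact_mod_cast hprodpos) h2
    have h4 : Real.log ((Nat.factorial n : ℕ) : ℝ) ≤ (n : ℝ) * Real.log n := by
      have hfl := Nat.factorial_le_pow n
      calc Real.log ((Nat.factorial n : ℕ) : ℝ) ≤ Real.log (((n ^ n : ℕ) : ℕ) : ℝ) :=
            Real.log_le_log (by exact_mod_cast n.factorial_pos) (by exact_mod_cast hfl)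
        _ = (n : ℝ) * Real.log n := by push_cast; rw [Real.log_pow]
    have h5 : Real.log (n : ℝ) ≤ Real.log x := Real.log_le_log hn0 hnx
    have h6 : 0 ≤ (n : ℝ) := hn0.le
    calc ∑ p ∈ S, ((n / p : ℕ) : ℝ) * Real.log p ≤ (n : ℝ) * Real.log n :=
          h1 ▸ h3.trans h4
      _ ≤ (n : ℝ) * Real.log x := mul_le_mul_of_nonneg_left h5 h6
  have hB : ∑ p ∈ S, Real.log p ≤ (n : ℝ) * Real.log 4 := by
    have hne : ∀ p ∈ S, (p : ℝ) ≠ 0 := by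
      intro p hp
      simp only [hS, Finset.mem_filter] at hp
      exact_mod_cast hp.2.pos.ne'
    have h1 : ∑ p ∈ S, Real.log p = Real.log ((∏ p ∈ S, p : ℕ) : ℝ) := by
      push_cast
      rw [Real.log_prod hne]
    have hprim : (∏ p ∈ S, p : ℕ) ≤ 4 ^ n := primorial_le_4_pow n
    have hprodpos : 0 < ∏ p ∈ S, p := by
      apply Finset.prod_pos
      intro p hp
      simp only [hS, Finset.mem_filter] at hp
      exact hp.2.pos
    calc ∑ p ∈ S, Real.log p = Real.log ((∏ p ∈ S, p : ℕ) : ℝ) := h1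
      _ ≤ Real.log (((4 ^ n : ℕ) : ℕ) : ℝ) :=
          Real.log_le_log (by exact_mod_cast hprodpos) (by exact_mod_cast hprim)
      _ = (n : ℝ) * Real.log 4 := by push_cast; rw [Real.log_pow]
  calc ∑ p ∈ S, Real.log p / p
      ≤ ∑ p ∈ S, (((n / p : ℕ) : ℝ) * Real.log p + Real.log p) / n :=
        Finset.sum_le_sum key
    _ = ((∑ p ∈ S, ((n / p : ℕ) : ℝ) * Real.log p) + ∑ p ∈ S, Real.log p) / n := by
        rw [← Finset.sum_add_distrib, Finset.sum_div]
    _ ≤ ((n : ℝ) * Real.log x + (n : ℝ) * Real.log 4) / n := by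
        gcongr
    _ = Real.log x + Real.log 4 := by
        rw [← mul_add, mul_comm, mul_div_assoc, div_self hn0.ne', mul_one]
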